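/- For any positive integers n, k, every perfect k-coloring φ of the infinite path graph (vertex set ℤ, i ~ i±1) with period [1 2 3 ⋯ k] (i.e., φ(i) = (i mod k) + 1) is also a perfect coloring of the infinite circulant graph Ci_∞(D_n) when k = 2n+1, with the induced parameter matrix. -/

import Mathlib

/-- Neighborhood of `i` in the infinite circulant graph `Ci_∞(D_n)`,
`D_n = {±1, ±3, …, ±(2n-1)}`: the integers at odd distance less than `2n` from `i`. -/
noncomputable def nbrs (n : ℕ) (i : ℤ) : Finset ℤ :=
  (Finset.Icc (i - (2*(n:ℤ) - 1)) (i + (2*(n:ℤ) - 1))).filter (fun j => Odd (j - i))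

/-- `φ` is a perfect 2-coloring of `Ci_∞(D_n)` with outer degrees `(b, c)`:
every vertex of color 0 (black) has exactly `b` neighbors of color 1 (white), and
every vertex of color 1 has exactly `c` neighbors of color 0. -/
def Perfect2 (n : ℕ) (φ : ℤ → Fin 2) (b c : ℕ) : Prop :=
  (∀ i, φ i = 0 → ((nbrs n i).filter (fun j => φ j = 1)).card = b) ∧
  (∀ i, φ i = 1 → ((nbrs n i).filter (fun j => φ j = 0)).card = c)

lemma mem_nbrs {n : ℕ} {i x : ℤ} :
    x ∈ nbrs n i ↔ (i - (2*(n:ℤ) - 1) ≤ x ∧ x ≤ i + (2*(n:ℤ) - 1)) ∧ Odd (x - i) := by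
  simp [nbrs, Finset.mem_filter, Finset.mem_Icc]

/-- The coloring of `ℤ` by residues mod `2n+1` (period `[1 2 ⋯ (2n+1)]`),
which is a perfect coloring of the infinite path graph, is also a perfect
`(2n+1)`-coloring of `Ci_∞(D_n)` with the induced parameter matrix. -/
theorem cyclic_coloring_perfect (n : ℕ) (hn : 0 < n) :
    ∃ M : ZMod (2*n + 1) → ZMod (2*n + 1) → ℕ,
      ∀ (i : ℤ) (j : ZMod (2*n + 1)),
        ((nbrs n i).filter (fun x : ℤ => ((x : ZMod (2*n + 1)) = j))).card
          = M (i : ZMod (2*n + 1)) j := by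
  haveI : NeZero (2*n+1) := ⟨by omega⟩
  refine ⟨fun a b => if b = a then 0 else 1, ?_⟩
  intro i j
  show _ = if j = (i : ZMod (2*n+1)) then 0 else 1
  by_cases hji : j = (i : ZMod (2*n+1))
  · rw [if_pos hji, Finset.card_eq_zero, Finset.filter_eq_empty_iff]
    intro x hx
    obtain ⟨⟨hl, hr⟩, m, hm⟩ := mem_nbrs.mp hx
    subst hji
    intro hc
    have hmod := (ZMod.intCast_eq_intCast_iff _ _ _).mp hc
    have hdvd : ((2*n+1 : ℕ) : ℤ) ∣ i - x := hmod.dvd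
    have hz : i - x = 0 := Int.eq_zero_of_abs_lt_dvd hdvd (by
      push_cast; rw [abs_lt]; omega)
    omega
  · rw [if_neg hji]
    rw [Finset.card_eq_one]
    obtain ⟨r, hrdef⟩ : ∃ r : ℕ, r = (j - (i : ZMod (2*n+1))).val := ⟨_, rfl⟩
    have hrk : r < 2*n+1 := hrdef ▸ ZMod.val_lt _
    have hr0 : r ≠ 0 := by
      intro h
      apply hji
      have := (ZMod.val_eq_zero _).mp (hrdef ▸ h)
      linear_combination this
    have hcast : ((r : ℕ) : ZMod (2*n+1)) = j - (i : ZMod (2*n+1)) := by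
      rw [hrdef, ZMod.natCast_val, ZMod.cast_id]
    obtain ⟨x, hxdef⟩ : ∃ x : ℤ, x = if Odd r then i + r else i + r - (2*n+1) := ⟨_, rfl⟩
    have hxmem : x ∈ nbrs n i := by
      rw [mem_nbrs]
      rcases Nat.even_or_odd r with he | ho
      · rw [hxdef, if_neg (by simp [Nat.not_odd_iff_even.mpr he])]
        obtain ⟨m, hm⟩ := he
        constructor
        · constructor <;> push_cast <;> omega
        · exact ⟨(m : ℤ) - n - 1, by push_cast; omega⟩
      · rw [hxdef, if_pos ho]
        obtain ⟨m, hm⟩ := ho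
        constructor
        · constructor <;> push_cast <;> omega
        · exact ⟨m, by push_cast; omega⟩
    have hxcast : ((x : ℤ) : ZMod (2*n+1)) = j := by
      rcases em (Odd r) with ho | ho
      · rw [hxdef, if_pos ho]
        push_cast
        rw [hcast]
        ring
      · rw [hxdef, if_neg ho]
        have h0 : ((2*n+1 : ℕ) : ZMod (2*n+1)) = 0 := ZMod.natCast_self _
        push_cast at h0 ⊢
        rw [hcast]
        linear_combination -h0
    refine ⟨x, Finset.eq_singleton_iff_unique_mem.mpr ⟨Finset.mem_filter.mpr ⟨hxmem, hxcast⟩, ?_⟩⟩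
    intro y hy
    obtain ⟨hymem, hycast⟩ := Finset.mem_filter.mp hy
    obtain ⟨⟨hyl, hyr⟩, my, hmy⟩ := mem_nbrs.mp hymem
    obtain ⟨⟨hxl, hxr⟩, mx, hmx⟩ := mem_nbrs.mp hxmem
    have hc : ((y : ℤ) : ZMod (2*n+1)) = x := by rw [hycast, hxcast]
    have hmod := (ZMod.intCast_eq_intCast_iff _ _ _).mp hc
    have hdvd : ((2*n+1 : ℕ) : ℤ) ∣ x - y := hmod.dvd
    obtain ⟨c, hcc⟩ := hdvd
    have heven : Even ((2*n+1 : ℕ) * c : ℤ) := by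
      rw [← hcc]; exact ⟨mx - my, by omega⟩
    have hec : Even c := by
      rcases (Int.even_mul.mp heven) with h | h
      · exfalso; rw [Int.even_iff] at h; push_cast at h; omega
      · exact h
    obtain ⟨d, hd⟩ := hec
    have hdvd2 : (2 * (2*n+1 : ℕ) : ℤ) ∣ x - y := ⟨d, by rw [hcc, hd]; push_cast; ring⟩
    have hz : x - y = 0 := Int.eq_zero_of_abs_lt_dvd hdvd2 (by
      push_cast; rw [abs_lt]; constructor <;> omega)
    omega
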